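/- Let $X = [x_1\; x_2\; \ldots\; x_n]$ be a real $k \times n$ matrix whose columns are points $x_i \in \mathbb{R}^k$, and let $D = \mathrm{edm}(X)$ be the $n \times n$ matrix with entries $d_{ij} = \|x_i - x_j\|_2^2$. Then the rank of $D$ is at most $k + 2$. -/

import Mathlib

open Matrix Module

lemma matrix_rank_add_le {n m : ℕ} (A B : Matrix (Fin m) (Fin n) ℝ) :
    (A + B).rank ≤ A.rank + B.rank := by
  rw [Matrix.rank, Matrix.rank, Matrix.rank, Matrix.mulVecLin_add]
  calc finrank ℝ (LinearMap.range (A.mulVecLin + B.mulVecLin))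
      ≤ finrank ℝ ((LinearMap.range A.mulVecLin) ⊔ (LinearMap.range B.mulVecLin) :
          Submodule ℝ (Fin m → ℝ)) := by
        apply Submodule.finrank_mono
        rintro x ⟨v, rfl⟩
        exact Submodule.add_mem_sup ⟨v, rfl⟩ ⟨v, rfl⟩
    _ ≤ _ := Submodule.finrank_add_le_finrank_add_finrank _ _

lemma rank_vecMulVec_le {n : ℕ} (a b : Fin n → ℝ) :
    (Matrix.vecMulVec a b).rank ≤ 1 := by
  rw [Matrix.vecMulVec_eq Unit]
  exact (Matrix.rank_mul_le_left _ _).trans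
    ((Matrix.rank_le_card_width _).trans (by simp))

/-- The rank of the Euclidean distance matrix of `n` points in `ℝ^k`
(the columns of `X`) is at most `k + 2`. -/
theorem rank_edm_le (k n : ℕ) (X : Matrix (Fin k) (Fin n) ℝ)
    (D : Matrix (Fin n) (Fin n) ℝ)
    (hD : ∀ i j, D i j = ∑ l, (X l i - X l j) ^ 2) :
    D.rank ≤ k + 2 := by
  set a : Fin n → ℝ := fun i => ∑ l, X l i ^ 2 with ha
  have hsplit : D = Matrix.vecMulVec a (fun _ => 1)
      + (Matrix.vecMulVec (fun _ => 1) a + Xᵀ * ((-2 : ℝ) • X)) := by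
    ext i j
    simp only [Matrix.add_apply, Matrix.vecMulVec_apply, Matrix.mul_apply,
      Matrix.smul_apply, Matrix.transpose_apply, smul_eq_mul, hD, ha]
    rw [one_mul, mul_one, ← Finset.sum_add_distrib, ← Finset.sum_add_distrib]
    exact Finset.sum_congr rfl fun l _ => by ring
  rw [hsplit]
  calc (Matrix.vecMulVec a (fun _ => 1)
      + (Matrix.vecMulVec (fun _ => 1) a + Xᵀ * ((-2 : ℝ) • X))).rank
      ≤ (Matrix.vecMulVec a (fun _ => 1)).rank
        + (Matrix.vecMulVec (fun _ => 1) a + Xᵀ * ((-2 : ℝ) • X)).rank :=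
        matrix_rank_add_le _ _
    _ ≤ (Matrix.vecMulVec a (fun _ => 1)).rank
        + ((Matrix.vecMulVec (fun _ => 1) a).rank + (Xᵀ * ((-2 : ℝ) • X)).rank) :=
        add_le_add (le_refl _) (matrix_rank_add_le _ _)
    _ ≤ 1 + (1 + k) := by
        gcongr
        · exact _root_.rank_vecMulVec_le _ _
        · exact _root_.rank_vecMulVec_le _ _
        · exact (Matrix.rank_mul_le_left _ _).trans
            ((Matrix.rank_le_card_width _).trans (by simp))
    _ ≤ k + 2 := by omega
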